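/- arXiv:2405.05656 — 6 statements merged into one kernel-verified Lean document; each statement's English description precedes it below -/
import Mathlib

section
/- Let a₁,…,aₙ and b₁,…,bₙ be strictly positive real numbers, and let 0 < λ₁ < λ₂ < 1. If ∑_{i=1}^n (aᵢ − bᵢ)/(λ₁·aᵢ + (1−λ₁)·bᵢ) = 0 and ∑_{i=1}^n (aᵢ − bᵢ)/(λ₂·aᵢ + (1−λ₂)·bᵢ) = 0, then aᵢ = bᵢ for every i = 1,…,n. -/
/-- The paper's explicit derivative verification: if the derivative of
`λ ↦ ∑ i, log (λ * a i + (1 - λ) * b i)`, namely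
`∑ i, (a i - b i) / (λ * a i + (1 - λ) * b i)`, vanishes at two distinct
interior points `λ₁ < λ₂` of `(0,1)`, then `a i = b i` for every `i`. -/
theorem eq_of_deriv_vanishes_at_two_points
    (n : ℕ) (a b : Fin n → ℝ) (ha : ∀ i, 0 < a i) (hb : ∀ i, 0 < b i)
    (l₁ l₂ : ℝ) (h0 : 0 < l₁) (h12 : l₁ < l₂) (h1 : l₂ < 1)
    (hd₁ : ∑ i : Fin n, (a i - b i) / (l₁ * a i + (1 - l₁) * b i) = 0)
    (hd₂ : ∑ i : Fin n, (a i - b i) / (l₂ * a i + (1 - l₂) * b i) = 0) :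
    ∀ i, a i = b i := by
  have hpos : ∀ (l : ℝ), 0 < l → l < 1 → ∀ i, 0 < l * a i + (1 - l) * b i := by
    intro l hl hl1 i
    have := mul_pos hl (ha i)
    have := mul_pos (by linarith : (0:ℝ) < 1 - l) (hb i)
    linarith
  have hp1 := hpos l₁ h0 (by linarith)
  have hp2 := hpos l₂ (by linarith) h1
  have hterm : ∀ i : Fin n,
      (a i - b i) / (l₁ * a i + (1 - l₁) * b i)
        - (a i - b i) / (l₂ * a i + (1 - l₂) * b i)
      = (a i - b i) ^ 2 * (l₂ - l₁)
          / ((l₁ * a i + (1 - l₁) * b i) * (l₂ * a i + (1 - l₂) * b i)) := by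
    intro i
    rw [div_sub_div _ _ (ne_of_gt (hp1 i)) (ne_of_gt (hp2 i))]
    ring
  have hsum : ∑ i : Fin n, (a i - b i) ^ 2 * (l₂ - l₁)
      / ((l₁ * a i + (1 - l₁) * b i) * (l₂ * a i + (1 - l₂) * b i)) = 0 := by
    rw [← Finset.sum_congr rfl fun i _ => hterm i, Finset.sum_sub_distrib, hd₁, hd₂]
    ring
  have hnz : ∀ i ∈ Finset.univ, (0:ℝ) ≤ (a i - b i) ^ 2 * (l₂ - l₁)
      / ((l₁ * a i + (1 - l₁) * b i) * (l₂ * a i + (1 - l₂) * b i)) := by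
    intro i _
    apply div_nonneg
    · exact mul_nonneg (sq_nonneg _) (by linarith)
    · exact le_of_lt (mul_pos (hp1 i) (hp2 i))
  intro i
  have := (Finset.sum_eq_zero_iff_of_nonneg hnz).mp hsum i (Finset.mem_univ i)
  have hden : (l₁ * a i + (1 - l₁) * b i) * (l₂ * a i + (1 - l₂) * b i) ≠ 0 :=
    ne_of_gt (mul_pos (hp1 i) (hp2 i))
  have hnum : (a i - b i) ^ 2 * (l₂ - l₁) = 0 := by
    field_simp at this
    exact (div_eq_zero_iff.mp this).resolve_right (mul_pos (by linarith [hp1 i]) (by linarith [hp2 i])).ne'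
  have : (a i - b i) ^ 2 = 0 := by
    rcases mul_eq_zero.mp hnum with h | h
    · exact h
    · linarith
  have := pow_eq_zero_iff (n := 2) (by norm_num) |>.mp this
  linarith
end

section
/- Let Θ and 𝒴 be measurable spaces, μ a σ-finite measure on 𝒴, and f : 𝒴 × Θ → [0,∞) jointly measurable with ∫ f(y,θ) dμ(y) = 1 for every θ. For a probability measure G on Θ set f_G(y) = ∫ f(y,θ) dG(θ). Fix observations y₁,…,yₙ ∈ 𝒴 and suppose Ĝ maximizes the likelihood G ↦ ∏_{i=1}^n f_G(yᵢ) over all probability measures G on Θ, with ∏_{i=1}^n f_{Ĝ}(yᵢ) strictly positive and finite. Then for every probability measure Q on Θ, ∑_{i=1}^n f_Q(yᵢ)/f_{Ĝ}(yᵢ) ≤ n. -/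
open MeasureTheory ENNReal NNReal Set Filter Topology

/-- First-order optimality condition of a GMLE: if `Ghat` maximizes the
likelihood `G ↦ ∏ i, f_G (y i)` over probability measures on `Θ`, with the
maximal likelihood strictly positive and finite, then for every probability
measure `Q` on `Θ` we have `∑ i, f_Q (y i) / f_{Ghat} (y i) ≤ n`. -/
theorem gmle_first_order_condition
    {Θ 𝒴 : Type*} [MeasurableSpace Θ] [MeasurableSpace 𝒴]
    (μ : Measure 𝒴) [SigmaFinite μ]
    (f : 𝒴 → Θ → ℝ≥0) (hf : Measurable (Function.uncurry f))
    (hf1 : ∀ θ, ∫⁻ y, (f y θ : ℝ≥0∞) ∂μ = 1)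
    (n : ℕ) (y : Fin n → 𝒴)
    (Ghat : Measure Θ) [IsProbabilityMeasure Ghat]
    (hGhat : ∀ G : Measure Θ, IsProbabilityMeasure G →
      ∏ i : Fin n, ∫⁻ θ, (f (y i) θ : ℝ≥0∞) ∂G ≤
        ∏ i : Fin n, ∫⁻ θ, (f (y i) θ : ℝ≥0∞) ∂Ghat)
    (hpos : 0 < ∏ i : Fin n, ∫⁻ θ, (f (y i) θ : ℝ≥0∞) ∂Ghat)
    (hfin : ∏ i : Fin n, ∫⁻ θ, (f (y i) θ : ℝ≥0∞) ∂Ghat < ⊤) :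
    ∀ Q : Measure Θ, IsProbabilityMeasure Q →
      ∑ i : Fin n, (∫⁻ θ, (f (y i) θ : ℝ≥0∞) ∂Q) / (∫⁻ θ, (f (y i) θ : ℝ≥0∞) ∂Ghat)
        ≤ (n : ℝ≥0∞) := by
  intro Q hQ
  set a : Fin n → ℝ≥0∞ := fun i => ∫⁻ θ, (f (y i) θ : ℝ≥0∞) ∂Ghat with ha_def
  set b : Fin n → ℝ≥0∞ := fun i => ∫⁻ θ, (f (y i) θ : ℝ≥0∞) ∂Q with hb_def
  -- basic facts about a
  have ha0 : ∀ i, a i ≠ 0 := by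
    intro i h
    exact hpos.ne' (Finset.prod_eq_zero (Finset.mem_univ i) h)
  have hafin : ∀ i, a i ≠ ⊤ := by
    intro i hi
    apply hfin.ne
    have : ∏ j : Fin n, a j = a i * ∏ j ∈ Finset.univ.erase i, a j :=
      (Finset.mul_prod_erase _ _ (Finset.mem_univ i)).symm
    rw [this, hi, ENNReal.top_mul]
    rw [Finset.prod_ne_zero_iff]
    intro j _
    exact ha0 j
  -- the mixture inequality in ℝ≥0∞
  have hmix : ∀ s : ℝ≥0, s ≤ 1 →
      ∏ i : Fin n, ((1 - (s : ℝ≥0∞)) * a i + (s : ℝ≥0∞) * b i) ≤ ∏ i : Fin n, a i := by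
    intro s hs
    set G : Measure Θ := (1 - (s : ℝ≥0∞)) • Ghat + (s : ℝ≥0∞) • Q with hG
    have hcoe : (1 - (s : ℝ≥0∞)) = ((1 - s : ℝ≥0) : ℝ≥0∞) := by
      rw [ENNReal.coe_sub]; simp
    have hGprob : IsProbabilityMeasure G := by
      constructor
      have : G Set.univ = (1 - (s : ℝ≥0∞)) * 1 + (s : ℝ≥0∞) * 1 := by
        rw [hG]
        simp [Measure.add_apply, Measure.smul_apply, measure_univ, smul_eq_mul]
      rw [this, mul_one, mul_one, hcoe, ← ENNReal.coe_add, tsub_add_cancel_of_le hs]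
      simp
    have hint : ∀ i, ∫⁻ θ, (f (y i) θ : ℝ≥0∞) ∂G
        = (1 - (s : ℝ≥0∞)) * a i + (s : ℝ≥0∞) * b i := by
      intro i
      rw [hG, lintegral_add_measure, lintegral_smul_measure, lintegral_smul_measure]
      rfl
    have := hGhat G hGprob
    simpa [hint] using this
  -- b is finite
  have hbfin : ∀ i, b i ≠ ⊤ := by
    intro i hi
    have h2 := hmix (1/2) (by norm_num)
    apply hfin.ne
    apply top_le_iff.mp
    refine le_trans ?_ h2
    have : ∏ j : Fin n, ((1 - ((1/2 : ℝ≥0) : ℝ≥0∞)) * a j + ((1/2 : ℝ≥0) : ℝ≥0∞) * b j)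
        = ((1 - ((1/2 : ℝ≥0) : ℝ≥0∞)) * a i + ((1/2 : ℝ≥0) : ℝ≥0∞) * b i)
          * ∏ j ∈ Finset.univ.erase i, ((1 - ((1/2 : ℝ≥0) : ℝ≥0∞)) * a j + ((1/2 : ℝ≥0) : ℝ≥0∞) * b j) :=
      (Finset.mul_prod_erase _ _ (Finset.mem_univ i)).symm
    rw [this]
    have hhalf : ((1/2 : ℝ≥0) : ℝ≥0∞) ≠ 0 := by norm_num
    have h1 : (1 - ((1/2 : ℝ≥0) : ℝ≥0∞)) * a i + ((1/2 : ℝ≥0) : ℝ≥0∞) * b i = ⊤ := by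
      rw [hi, ENNReal.mul_top hhalf, add_top]
    rw [h1, ENNReal.top_mul]
    · rw [Finset.prod_ne_zero_iff]
      intro j _
      intro hzero
      have : ((1/2 : ℝ≥0) : ℝ≥0∞) * b j = 0 ∧ (1 - ((1/2 : ℝ≥0) : ℝ≥0∞)) * a j = 0 := by
        constructor <;> [exact (add_eq_zero.mp hzero).2; exact (add_eq_zero.mp hzero).1]
      have h3 := this.2
      rw [mul_eq_zero] at h3
      rcases h3 with h3 | h3
      · rw [tsub_eq_zero_iff_le] at h3
        norm_num at h3
      · exact ha0 j h3
  -- pass to real numbers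
  set A : Fin n → ℝ := fun i => (a i).toReal with hA_def
  set B : Fin n → ℝ := fun i => (b i).toReal with hB_def
  have hApos : ∀ i, 0 < A i := fun i => ENNReal.toReal_pos (ha0 i) (hafin i)
  have hBnn : ∀ i, 0 ≤ B i := fun i => ENNReal.toReal_nonneg
  set g : ℝ → ℝ := fun t => ∏ i : Fin n, ((1 - t) * A i + t * B i) with hg_def
  have hg0 : g 0 = ∏ i : Fin n, A i := by simp [hg_def]
  -- real mixture inequality
  have hgle : ∀ t ∈ Icc (0:ℝ) 1, g t ≤ g 0 := by
    intro t ht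
    set s : ℝ≥0 := t.toNNReal with hs_def
    have hs1 : s ≤ 1 := by
      rw [hs_def, ← Real.toNNReal_one]
      exact Real.toNNReal_mono ht.2
    have hst : (s : ℝ) = t := Real.coe_toNNReal t ht.1
    have key := hmix s hs1
    have hLfin : ∏ i : Fin n, ((1 - (s : ℝ≥0∞)) * a i + (s : ℝ≥0∞) * b i) ≠ ⊤ :=
      (lt_of_le_of_lt key hfin).ne
    have := (ENNReal.toReal_le_toReal hLfin hfin.ne).mpr key
    rw [ENNReal.toReal_prod, ENNReal.toReal_prod] at this
    rw [hg0, hg_def]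
    convert this using 2 with i
    · have hterm : ((1 - (s : ℝ≥0∞)) * a i + (s : ℝ≥0∞) * b i).toReal
        = (1 - (s : ℝ≥0∞)).toReal * A i + (s : ℝ≥0∞).toReal * B i := by
        rw [ENNReal.toReal_add, ENNReal.toReal_mul, ENNReal.toReal_mul]
        · exact ENNReal.mul_ne_top (by simp [ENNReal.sub_ne_top]) (hafin i)
        · exact ENNReal.mul_ne_top ENNReal.coe_ne_top (hbfin i)
      rw [hterm]
      have h1s : (1 - (s : ℝ≥0∞)).toReal = 1 - t := by
        rw [ENNReal.toReal_sub_of_le (by exact_mod_cast hs1) (by simp)]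
        simp [hst]
      rw [h1s, ENNReal.coe_toReal, hst]
  -- derivative of g at 0
  set D : ℝ := ∑ i : Fin n, (∏ j ∈ Finset.univ.erase i, A j) * (B i - A i) with hD_def
  have hd : HasDerivAt g D 0 := by
    have hfac : ∀ i : Fin n, HasDerivAt (fun t : ℝ => (1 - t) * A i + t * B i) (B i - A i) 0 := by
      intro i
      have h1 : HasDerivAt (fun t : ℝ => (1 - t) * A i) ((-1) * A i) 0 :=
        ((hasDerivAt_id (0:ℝ)).const_sub 1).mul_const (A i)
      have h2 : HasDerivAt (fun t : ℝ => t * B i) (1 * B i) 0 :=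
        (hasDerivAt_id (0:ℝ)).mul_const (B i)
      have := h1.add h2
      exact this.congr_deriv (by ring)
    have := HasDerivAt.fun_finsetProd (u := Finset.univ) (f := fun i (t : ℝ) => (1 - t) * A i + t * B i)
      (f' := fun i => B i - A i) (x := 0) (fun i _ => hfac i)
    refine this.congr_deriv ?_
    rw [hD_def]
    congr 1
    ext i
    simp [smul_eq_mul]
  -- D ≤ 0 from one-sided local maximality
  have hD0 : D ≤ 0 := by
    have hslope : Tendsto (slope g 0) (𝓝[>] 0) (𝓝 D) :=
      (hasDerivAt_iff_tendsto_slope.mp hd).mono_left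
        (nhdsWithin_mono _ (fun x hx => ne_of_gt hx))
    refine le_of_tendsto hslope ?_
    filter_upwards [Ioc_mem_nhdsGT (zero_lt_one)] with t ht
    rw [slope_def_field]
    have := hgle t ⟨ht.1.le, ht.2⟩
    apply div_nonpos_of_nonpos_of_nonneg
    · linarith
    · linarith [ht.1]
  -- unfold D and conclude the real inequality
  have hPA : 0 < ∏ i : Fin n, A i := Finset.prod_pos fun i _ => hApos i
  have hreal : ∑ i : Fin n, B i / A i ≤ (n : ℝ) := by
    have hkey : ∀ i : Fin n, (∏ j ∈ Finset.univ.erase i, A j) * (B i - A i)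
        = (∏ j : Fin n, A j) * (B i / A i) - (∏ j : Fin n, A j) := by
      intro i
      have herase : A i * ∏ j ∈ Finset.univ.erase i, A j = ∏ j : Fin n, A j :=
        Finset.mul_prod_erase _ _ (Finset.mem_univ i)
      have hAi := (hApos i).ne'
      have h2 : (∏ j : Fin n, A j) * (B i / A i) = (∏ j ∈ Finset.univ.erase i, A j) * B i := by
        rw [← herase]
        field_simp
      rw [mul_sub, h2, ← herase, mul_comm (A i)]
    rw [hD_def] at hD0
    simp only [hkey] at hD0
    rw [Finset.sum_sub_distrib, ← Finset.mul_sum] at hD0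
    simp only [Finset.sum_const, Finset.card_univ, Fintype.card_fin, nsmul_eq_mul] at hD0
    have : (∏ j : Fin n, A j) * (∑ i : Fin n, B i / A i) ≤ (n : ℝ) * ∏ j : Fin n, A j := by
      linarith
    calc ∑ i : Fin n, B i / A i
        = ((∏ j : Fin n, A j) * (∑ i : Fin n, B i / A i)) / (∏ j : Fin n, A j) := by
          field_simp
      _ ≤ ((n : ℝ) * ∏ j : Fin n, A j) / (∏ j : Fin n, A j) := by
          gcongr
      _ = (n : ℝ) := by field_simp
  -- back to ℝ≥0∞
  have hterm_ne_top : ∀ i : Fin n, b i / a i ≠ ⊤ := by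
    intro i
    exact (ENNReal.div_lt_top (hbfin i) (ha0 i)).ne
  have hsum_ne_top : ∑ i : Fin n, b i / a i ≠ ⊤ := by
    rw [← lt_top_iff_ne_top]
    exact ENNReal.sum_lt_top.mpr fun i _ => lt_top_iff_ne_top.mpr (hterm_ne_top i)
  rw [← ENNReal.toReal_le_toReal hsum_ne_top (ENNReal.natCast_ne_top n)]
  rw [ENNReal.toReal_sum (fun i _ => hterm_ne_top i), ENNReal.toReal_natCast]
  convert hreal using 2 with i
  rw [ENNReal.toReal_div]
end

section
/- Let Θ be a measurable space, 𝒴 a finite nonempty set, and f : 𝒴 × Θ → (0,∞) measurable in θ with ∑_{y ∈ 𝒴} f(y,θ) = 1 for every θ. For a probability measure G on Θ set f_G(y) = ∫ f(y,θ) dG(θ). Fix observations y₁,…,yₙ ∈ 𝒴 such that every element of 𝒴 occurs among y₁,…,yₙ. If Ĝ₁ and Ĝ₂ both maximize the likelihood G ↦ ∏_{i=1}^n f_G(yᵢ) over all probability measures G on Θ, then f_{Ĝ₁}(y) = f_{Ĝ₂}(y) for every y ∈ 𝒴. -/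
open MeasureTheory ENNReal NNReal

lemma real_key {n : ℕ} (A B : Fin n → ℝ) (hA : ∀ i, 0 < A i) (hB : ∀ i, 0 < B i)
    (hL : ∏ i, A i = ∏ i, B i)
    (hmid : ∏ i, (2⁻¹ * (A i + B i)) ≤ ∏ i, A i) : ∀ i, A i = B i := by
  intro j
  by_contra hne
  set C : Fin n → ℝ := fun i => 2⁻¹ * (A i + B i) with hC
  have hCpos : ∀ i, 0 < C i := fun i => by have := hA i; have := hB i; positivity
  have hABle : ∀ i, A i * B i ≤ C i ^ 2 := fun i => by
    simp only [hC]; nlinarith [sq_nonneg (A i - B i)]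
  have hABlt : A j * B j < C j ^ 2 := by
    simp only [hC]
    rcases lt_or_gt_of_ne hne with h | h <;> nlinarith [sq_nonneg (A j - B j)]
  have hstrict : ∏ i, A i * B i < ∏ i, C i ^ 2 :=
    Finset.prod_lt_prod (fun i _ => mul_pos (hA i) (hB i)) (fun i _ => hABle i)
      ⟨j, Finset.mem_univ j, hABlt⟩
  have hCA : ∏ i, C i ≤ ∏ i, A i := hmid
  have hCnn : 0 ≤ ∏ i, C i := Finset.prod_nonneg fun i _ => (hCpos i).le
  have h2 : ∏ i, C i ^ 2 ≤ ∏ i, A i * B i := by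
    calc ∏ i, C i ^ 2 = (∏ i, C i) ^ 2 := by rw [Finset.prod_pow]
    _ ≤ (∏ i, A i) * (∏ i, B i) := by
        rw [sq, ← hL]; exact mul_le_mul hCA hCA hCnn (hCnn.trans hCA)
    _ = ∏ i, A i * B i := (Finset.prod_mul_distrib).symm
  exact absurd (hstrict.trans_le h2) (lt_irrefl _)

/-- Equation (14) of the paper: in the finite-support case, once every
possible outcome is realized among the observations, any two GMLEs induce
identical mixture densities on all of `𝒴`. -/
theorem gmle_mixture_density_eq_everywhere_of_finite_support
    {Θ 𝒴 : Type*} [MeasurableSpace Θ] [Fintype 𝒴] [Nonempty 𝒴]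
    (f : 𝒴 → Θ → ℝ≥0) (hfpos : ∀ y θ, 0 < f y θ)
    (hfmeas : ∀ y, Measurable fun θ => f y θ)
    (hf1 : ∀ θ, ∑ y : 𝒴, f y θ = 1)
    (n : ℕ) (y : Fin n → 𝒴) (hy : Function.Surjective y)
    (G₁ G₂ : Measure Θ) [IsProbabilityMeasure G₁] [IsProbabilityMeasure G₂]
    (hG₁ : ∀ G : Measure Θ, IsProbabilityMeasure G →
      ∏ i : Fin n, ∫⁻ θ, (f (y i) θ : ℝ≥0∞) ∂G ≤
        ∏ i : Fin n, ∫⁻ θ, (f (y i) θ : ℝ≥0∞) ∂G₁)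
    (hG₂ : ∀ G : Measure Θ, IsProbabilityMeasure G →
      ∏ i : Fin n, ∫⁻ θ, (f (y i) θ : ℝ≥0∞) ∂G ≤
        ∏ i : Fin n, ∫⁻ θ, (f (y i) θ : ℝ≥0∞) ∂G₂) :
    ∀ v : 𝒴, ∫⁻ θ, (f v θ : ℝ≥0∞) ∂G₁ = ∫⁻ θ, (f v θ : ℝ≥0∞) ∂G₂ := by
  classical
  -- f u θ ≤ 1
  have hfle1 : ∀ (u : 𝒴) (θ : Θ), f u θ ≤ 1 := by
    intro u θ
    calc f u θ ≤ ∑ w : 𝒴, f w θ :=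
          Finset.single_le_sum (f := fun w => f w θ) (fun _ _ => zero_le) (Finset.mem_univ u)
    _ = 1 := hf1 θ
  have key : ∀ (μ : Measure Θ), IsProbabilityMeasure μ → ∀ u : 𝒴,
      0 < ∫⁻ θ, (f u θ : ℝ≥0∞) ∂μ ∧ ∫⁻ θ, (f u θ : ℝ≥0∞) ∂μ ≤ 1 := by
    intro μ hμ u
    constructor
    · rw [lintegral_pos_iff_support ((hfmeas u).coe_nnreal_ennreal)]
      have hsupp : Function.support (fun θ => ((f u θ : ℝ≥0∞))) = Set.univ :=
        Set.eq_univ_of_forall fun θ => by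
          simp [ENNReal.coe_ne_zero, (hfpos u θ).ne']
      rw [hsupp, measure_univ]; exact zero_lt_one
    · calc ∫⁻ θ, (f u θ : ℝ≥0∞) ∂μ ≤ ∫⁻ _, 1 ∂μ :=
            lintegral_mono fun θ => ENNReal.coe_le_one_iff.mpr (hfle1 u θ)
      _ = 1 := by simp [measure_univ]
  set a : 𝒴 → ℝ≥0∞ := fun u => ∫⁻ θ, (f u θ : ℝ≥0∞) ∂G₁ with ha
  set b : 𝒴 → ℝ≥0∞ := fun u => ∫⁻ θ, (f u θ : ℝ≥0∞) ∂G₂ with hb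
  have ha0 : ∀ u, 0 < a u := fun u => (key G₁ inferInstance u).1
  have hb0 : ∀ u, 0 < b u := fun u => (key G₂ inferInstance u).1
  have haT : ∀ u, a u ≠ ∞ := fun u =>
    ((key G₁ inferInstance u).2.trans_lt one_lt_top).ne
  have hbT : ∀ u, b u ≠ ∞ := fun u =>
    ((key G₂ inferInstance u).2.trans_lt one_lt_top).ne
  -- the two maxima agree
  have hL : ∏ i : Fin n, a (y i) = ∏ i : Fin n, b (y i) :=
    le_antisymm (hG₂ G₁ inferInstance) (hG₁ G₂ inferInstance)
  -- the midpoint measure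
  set G : Measure Θ := (2⁻¹ : ℝ≥0∞) • G₁ + (2⁻¹ : ℝ≥0∞) • G₂ with hG
  have hGprob : IsProbabilityMeasure G := by
    constructor
    simp [hG, Measure.add_apply, measure_univ, ENNReal.inv_two_add_inv_two]
  have hGint : ∀ u : 𝒴, ∫⁻ θ, (f u θ : ℝ≥0∞) ∂G = 2⁻¹ * (a u + b u) := by
    intro u
    rw [hG, lintegral_add_measure, lintegral_smul_measure, lintegral_smul_measure, smul_eq_mul, smul_eq_mul,
      ha, hb, mul_add]
  have hmid : ∏ i : Fin n, (2⁻¹ * (a (y i) + b (y i))) ≤ ∏ i : Fin n, a (y i) := by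
    have := hG₁ G hGprob
    simpa only [hGint] using this
  -- pass to real numbers
  set A : Fin n → ℝ := fun i => (a (y i)).toReal with hA
  set B : Fin n → ℝ := fun i => (b (y i)).toReal with hB
  have hApos : ∀ i, 0 < A i := fun i =>
    ENNReal.toReal_pos (ha0 (y i)).ne' (haT (y i))
  have hBpos : ∀ i, 0 < B i := fun i =>
    ENNReal.toReal_pos (hb0 (y i)).ne' (hbT (y i))
  have hLR : ∏ i, A i = ∏ i, B i := by
    simp only [hA, hB, ← ENNReal.toReal_prod]
    rw [hL]
  have hPfinA : (∏ i : Fin n, a (y i)) ≠ ∞ := by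
    exact (ENNReal.prod_lt_top fun i _ => (haT (y i)).lt_top).ne
  have hmidR : ∏ i, (2⁻¹ * (A i + B i)) ≤ ∏ i, A i := by
    have h1 : ∀ i : Fin n, 2⁻¹ * (A i + B i) = (2⁻¹ * (a (y i) + b (y i))).toReal := by
      intro i
      rw [ENNReal.toReal_mul, ENNReal.toReal_add (haT (y i)) (hbT (y i))]
      simp [hA, hB]
    simp only [h1]
    simp only [hA, ← ENNReal.toReal_prod]
    exact ENNReal.toReal_mono hPfinA hmid
  have hfinal : ∀ i, A i = B i := real_key A B hApos hBpos hLR hmidR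
  intro v
  obtain ⟨i, rfl⟩ := hy v
  have : a (y i) = b (y i) := by
    have := hfinal i
    rw [hA, hB] at this
    exact (ENNReal.toReal_eq_toReal_iff' (haT (y i)) (hbT (y i))).mp this
  exact this
end

section
/- Let Θ be a measurable space, 𝒴 a finite nonempty set, and f : 𝒴 × Θ → (0,∞) measurable in θ with ∑_{y ∈ 𝒴} f(y,θ) = 1 for every θ. Let h : 𝒴 → ℝ be bounded and define η(θ) = ∑_{y ∈ 𝒴} h(y) f(y,θ). Fix observations y₁,…,yₙ ∈ 𝒴 such that every element of 𝒴 occurs among y₁,…,yₙ. If Ĝ₁ and Ĝ₂ both maximize the likelihood G ↦ ∏_{i=1}^n f_G(yᵢ) over all probability measures G on Θ, then ∫ η(θ) dĜ₁(θ) = ∫ η(θ) dĜ₂(θ). -/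
open MeasureTheory ENNReal NNReal

/-- Strict concavity argument: if two positive vectors have equal products and
the product of their averages does not exceed that common product, the
vectors coincide. -/
lemma gmle_aux_avg_eq {n : ℕ} (a b : Fin n → ℝ)
    (ha : ∀ i, 0 < a i) (hb : ∀ i, 0 < b i)
    (h1 : ∏ i, a i ≤ ∏ i, b i) (h2 : ∏ i, b i ≤ ∏ i, a i)
    (h3 : ∏ i, ((a i + b i) / 2) ≤ ∏ i, a i) : ∀ i, a i = b i := by
  by_contra hc
  push_neg at hc
  obtain ⟨j, hj⟩ := hc
  have hMeq : ∏ i, b i = ∏ i, a i := le_antisymm h2 h1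
  have hstrict : ∏ i, (a i * b i) < ∏ i, ((a i + b i) / 2) ^ 2 := by
    refine Finset.prod_lt_prod (fun i _ => mul_pos (ha i) (hb i))
      (fun i _ => by nlinarith [sq_nonneg (a i - b i)])
      ⟨j, Finset.mem_univ j, by
        have hne : a j - b j ≠ 0 := sub_ne_zero_of_ne hj
        have hpos : 0 < (a j - b j) * (a j - b j) := mul_self_pos.2 hne
        nlinarith⟩
  have hprodsq : ∏ i, ((a i + b i) / 2) ^ 2 = (∏ i, ((a i + b i) / 2)) ^ 2 := by
    rw [Finset.prod_pow]
  have hnn : (0:ℝ) ≤ ∏ i, ((a i + b i) / 2) :=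
    Finset.prod_nonneg fun i _ => div_nonneg (add_nonneg (ha i).le (hb i).le) (by norm_num)
  have h4 : (∏ i, ((a i + b i) / 2)) ^ 2 ≤ (∏ i, a i) ^ 2 := by
    have hA : (0:ℝ) ≤ ∏ i, a i := Finset.prod_nonneg fun i _ => (ha i).le
    nlinarith
  have h5 : ∏ i, (a i * b i) = (∏ i, a i) ^ 2 := by
    rw [Finset.prod_mul_distrib, hMeq, sq]
  linarith [hstrict, hprodsq ▸ h4, h5]

/-- Finite-sample content of the paper's Theorem 1: in the finite-support
case with every outcome realized among the observations, the estimated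
mixture mean `E_{Ĝ} η(θ)`, for `η θ = ∑ y, h y * f y θ = E_θ h(Y)`, is the
same for every GMLE `Ĝ`, despite non-identifiability of `G`. -/
theorem gmle_mixture_mean_unique_of_finite_support
    {Θ 𝒴 : Type*} [MeasurableSpace Θ] [Fintype 𝒴] [Nonempty 𝒴]
    (f : 𝒴 → Θ → ℝ≥0) (hfpos : ∀ y θ, 0 < f y θ)
    (hfmeas : ∀ y, Measurable fun θ => f y θ)
    (hf1 : ∀ θ, ∑ y : 𝒴, f y θ = 1)
    (h : 𝒴 → ℝ)
    (n : ℕ) (y : Fin n → 𝒴) (hy : Function.Surjective y)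
    (G₁ G₂ : Measure Θ) [IsProbabilityMeasure G₁] [IsProbabilityMeasure G₂]
    (hG₁ : ∀ G : Measure Θ, IsProbabilityMeasure G →
      ∏ i : Fin n, ∫⁻ θ, (f (y i) θ : ℝ≥0∞) ∂G ≤
        ∏ i : Fin n, ∫⁻ θ, (f (y i) θ : ℝ≥0∞) ∂G₁)
    (hG₂ : ∀ G : Measure Θ, IsProbabilityMeasure G →
      ∏ i : Fin n, ∫⁻ θ, (f (y i) θ : ℝ≥0∞) ∂G ≤
        ∏ i : Fin n, ∫⁻ θ, (f (y i) θ : ℝ≥0∞) ∂G₂) :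
    ∫ θ, (∑ v : 𝒴, h v * (f v θ : ℝ)) ∂G₁ = ∫ θ, (∑ v : 𝒴, h v * (f v θ : ℝ)) ∂G₂ := by
  classical
  -- pointwise bound f v θ ≤ 1
  have hle1 : ∀ (v : 𝒴) (θ : Θ), f v θ ≤ 1 := by
    intro v θ
    calc f v θ ≤ ∑ w : 𝒴, f w θ :=
          Finset.single_le_sum (fun w _ => (hfpos w θ).le.trans (le_refl _)) (Finset.mem_univ v)
      _ = 1 := hf1 θ
  set A : 𝒴 → ℝ≥0∞ := fun v => ∫⁻ θ, (f v θ : ℝ≥0∞) ∂G₁ with hA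
  set B : 𝒴 → ℝ≥0∞ := fun v => ∫⁻ θ, (f v θ : ℝ≥0∞) ∂G₂ with hB
  have hmeasE : ∀ v : 𝒴, Measurable fun θ => (f v θ : ℝ≥0∞) :=
    fun v => (hfmeas v).coe_nnreal_ennreal
  -- bounds
  have hAle1 : ∀ (G : Measure Θ) [IsProbabilityMeasure G] (v : 𝒴),
      ∫⁻ θ, (f v θ : ℝ≥0∞) ∂G ≤ 1 := by
    intro G _ v
    calc ∫⁻ θ, (f v θ : ℝ≥0∞) ∂G ≤ ∫⁻ _, 1 ∂G :=
          lintegral_mono fun θ => ENNReal.coe_le_one_iff.2 (hle1 v θ)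
      _ = 1 := by simp
  have hApos : ∀ (G : Measure Θ) [IsProbabilityMeasure G] (v : 𝒴),
      0 < ∫⁻ θ, (f v θ : ℝ≥0∞) ∂G := by
    intro G _ v
    rw [pos_iff_ne_zero]
    intro h0
    rw [lintegral_eq_zero_iff (hmeasE v)] at h0
    have : G {θ | (f v θ : ℝ≥0∞) ≠ 0} = 0 := h0
    have huniv : {θ | (f v θ : ℝ≥0∞) ≠ 0} = Set.univ := by
      ext θ; simp [ (hfpos v θ).ne' ]
    rw [huniv] at this
    simp [measure_univ] at this
  -- the mixture measure
  set Gm : Measure Θ := (2⁻¹ : ℝ≥0∞) • G₁ + (2⁻¹ : ℝ≥0∞) • G₂ with hGm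
  have hGmProb : IsProbabilityMeasure Gm := by
    constructor
    simp [hGm, Measure.add_apply, measure_univ, ENNReal.inv_two_add_inv_two]
  have hGmInt : ∀ v : 𝒴, ∫⁻ θ, (f v θ : ℝ≥0∞) ∂Gm = 2⁻¹ * A v + 2⁻¹ * B v := by
    intro v
    rw [hGm, lintegral_add_measure, lintegral_smul_measure, lintegral_smul_measure, smul_eq_mul, smul_eq_mul]
  -- real-valued versions
  set a : Fin n → ℝ := fun i => (A (y i)).toReal with ha
  set b : Fin n → ℝ := fun i => (B (y i)).toReal with hb
  have hAne : ∀ v, A v ≠ ⊤ := fun v => ((hAle1 G₁ v).trans_lt one_lt_top).ne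
  have hBne : ∀ v, B v ≠ ⊤ := fun v => ((hAle1 G₂ v).trans_lt one_lt_top).ne
  have hapos : ∀ i, 0 < a i := fun i =>
    ENNReal.toReal_pos (hApos G₁ (y i)).ne' (hAne (y i))
  have hbpos : ∀ i, 0 < b i := fun i =>
    ENNReal.toReal_pos (hApos G₂ (y i)).ne' (hBne (y i))
  have hprodA : (∏ i, A (y i)).toReal = ∏ i, a i := by
    rw [ENNReal.toReal_prod]
  have hprodB : (∏ i, B (y i)).toReal = ∏ i, b i := by
    rw [ENNReal.toReal_prod]
  have hprodAne : ∏ i, A (y i) ≠ ⊤ :=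
    (ENNReal.prod_lt_top fun i _ => (hAne (y i)).lt_top).ne
  have hprodBne : ∏ i, B (y i) ≠ ⊤ :=
    (ENNReal.prod_lt_top fun i _ => (hBne (y i)).lt_top).ne
  -- the three inequalities in ℝ
  have h1 : ∏ i, a i ≤ ∏ i, b i := by
    rw [← hprodA, ← hprodB]
    exact ENNReal.toReal_mono hprodBne (hG₂ G₁ inferInstance)
  have h2 : ∏ i, b i ≤ ∏ i, a i := by
    rw [← hprodA, ← hprodB]
    exact ENNReal.toReal_mono hprodAne (hG₁ G₂ inferInstance)
  have h3 : ∏ i, ((a i + b i) / 2) ≤ ∏ i, a i := by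
    have := hG₁ Gm hGmProb
    have hCval : ∀ i, (∫⁻ θ, (f (y i) θ : ℝ≥0∞) ∂Gm).toReal = (a i + b i) / 2 := by
      intro i
      rw [hGmInt]
      rw [ENNReal.toReal_add (by
          exact (ENNReal.mul_lt_top (by simp) (hAne (y i)).lt_top).ne)
        (by exact (ENNReal.mul_lt_top (by simp) (hBne (y i)).lt_top).ne)]
      rw [ENNReal.toReal_mul, ENNReal.toReal_mul]
      simp only [ENNReal.toReal_inv, ENNReal.toReal_ofNat]
      ring
    have hCne : ∏ i, ∫⁻ θ, (f (y i) θ : ℝ≥0∞) ∂Gm ≠ ⊤ := by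
      refine (ENNReal.prod_lt_top fun i _ => ?_).ne
      rw [hGmInt]
      exact ENNReal.add_lt_top.2 ⟨ENNReal.mul_lt_top (by simp) (hAne (y i)).lt_top,
        ENNReal.mul_lt_top (by simp) (hBne (y i)).lt_top⟩
    calc ∏ i, ((a i + b i) / 2)
        = (∏ i, ∫⁻ θ, (f (y i) θ : ℝ≥0∞) ∂Gm).toReal := by
          rw [ENNReal.toReal_prod]
          exact Finset.prod_congr rfl fun i _ => (hCval i).symm
      _ ≤ (∏ i, A (y i)).toReal := ENNReal.toReal_mono hprodAne this
      _ = ∏ i, a i := hprodA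
  have hab : ∀ i, a i = b i := gmle_aux_avg_eq a b hapos hbpos h1 h2 h3
  -- hence equal lintegrals for every v
  have hAB : ∀ v : 𝒴, A v = B v := by
    intro v
    obtain ⟨i, rfl⟩ := hy v
    exact (ENNReal.toReal_eq_toReal_iff' (hAne _) (hBne _)).1 (hab i)
  -- now compute the integrals
  have hint : ∀ (G : Measure Θ) [IsProbabilityMeasure G] (v : 𝒴),
      Integrable (fun θ => (f v θ : ℝ)) G := by
    intro G _ v
    refine (integrable_const (1:ℝ)).mono' ((hfmeas v).coe_nnreal_real.aestronglyMeasurable) ?_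
    filter_upwards with θ
    rw [Real.norm_eq_abs, abs_of_nonneg (f v θ).coe_nonneg]
    exact_mod_cast hle1 v θ
  have hval : ∀ (G : Measure Θ) [IsProbabilityMeasure G] (v : 𝒴),
      ∫ θ, (f v θ : ℝ) ∂G = (∫⁻ θ, (f v θ : ℝ≥0∞) ∂G).toReal := by
    intro G _ v
    rw [integral_eq_lintegral_of_nonneg_ae
      (Filter.Eventually.of_forall fun θ => (f v θ).coe_nonneg)
      ((hfmeas v).coe_nnreal_real.aestronglyMeasurable)]
    congr 1
    exact lintegral_congr fun θ => ENNReal.ofReal_coe_nnreal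
  have hsum : ∀ (G : Measure Θ) [IsProbabilityMeasure G],
      ∫ θ, (∑ v : 𝒴, h v * (f v θ : ℝ)) ∂G
        = ∑ v : 𝒴, h v * (∫⁻ θ, (f v θ : ℝ≥0∞) ∂G).toReal := by
    intro G _
    rw [integral_finset_sum _ fun v _ => (hint G v).const_mul (h v)]
    exact Finset.sum_congr rfl fun v _ => by
      rw [integral_const_mul, hval G v]
  rw [hsum G₁, hsum G₂]
  refine Finset.sum_congr rfl fun v _ => ?_
  have := hAB v
  simp only [hA, hB] at this
  rw [this]
end

section
/- Let Θ be a measurable space, 𝒴 a finite nonempty set, and f : 𝒴 × Θ → (0,∞) measurable in θ with ∑_{y ∈ 𝒴} f(y,θ) = 1 for every θ. Let h : 𝒴 → ℝ be bounded and define η(θ) = ∑_{y ∈ 𝒴} h(y) f(y,θ). Let y₁, y₂, … be a sequence in 𝒴 such that there exists N with every element of 𝒴 occurring among y₁,…,y_N. For each n, let Ĝ₁ⁿ and Ĝ₂ⁿ be probability measures on Θ that both maximize G ↦ ∏_{i=1}^n f_G(yᵢ) over all probability measures G on Θ. Then the sequence ∫ η dĜ₁ⁿ − ∫ η dĜ₂ⁿ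 converges to 0 as n → ∞. -/
open MeasureTheory ENNReal NNReal Filter

lemma prod_avg_forces_eq {n : ℕ} (α β : ℕ → ℝ)
    (hα : ∀ i ∈ Finset.range n, 0 < α i) (hβ : ∀ i ∈ Finset.range n, 0 < β i)
    (hAB : ∏ i ∈ Finset.range n, α i = ∏ i ∈ Finset.range n, β i)
    (hle : ∏ i ∈ Finset.range n, ((α i + β i) / 2) ≤ ∏ i ∈ Finset.range n, α i) :
    ∀ i ∈ Finset.range n, α i = β i := by
  set s := Finset.range n
  have hsq : ∀ i ∈ s, Real.sqrt (α i * β i) ≤ (α i + β i) / 2 := by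
    intro i hi
    have h1 : Real.sqrt (α i * β i) = Real.sqrt (α i) * Real.sqrt (β i) :=
      Real.sqrt_mul (hα i hi).le _
    nlinarith [sq_nonneg (Real.sqrt (α i) - Real.sqrt (β i)),
      Real.sq_sqrt (hα i hi).le, Real.sq_sqrt (hβ i hi).le,
      Real.sqrt_nonneg (α i), Real.sqrt_nonneg (β i)]
  have hsqpos : ∀ i ∈ s, 0 < Real.sqrt (α i * β i) := fun i hi =>
    Real.sqrt_pos.mpr (mul_pos (hα i hi) (hβ i hi))
  have hprodsq : ∏ i ∈ s, Real.sqrt (α i * β i) = ∏ i ∈ s, α i := by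
    have hApos : 0 < ∏ i ∈ s, α i := Finset.prod_pos hα
    have h2 : (∏ i ∈ s, Real.sqrt (α i * β i)) ^ 2 = (∏ i ∈ s, α i) ^ 2 := by
      rw [← Finset.prod_pow,
        Finset.prod_congr rfl (fun i hi => Real.sq_sqrt (mul_pos (hα i hi) (hβ i hi)).le),
        Finset.prod_mul_distrib, ← hAB, ← sq]
    exact (sq_eq_sq₀ (Finset.prod_nonneg fun i hi => Real.sqrt_nonneg _) hApos.le).mp h2
  have hmid : ∏ i ∈ s, Real.sqrt (α i * β i) = ∏ i ∈ s, ((α i + β i) / 2) := by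
    have h3 : ∏ i ∈ s, Real.sqrt (α i * β i) ≤ ∏ i ∈ s, ((α i + β i) / 2) :=
      Finset.prod_le_prod (fun i hi => (hsqpos i hi).le) hsq
    linarith [hprodsq ▸ hle]
  have heach : ∀ i ∈ s, Real.sqrt (α i * β i) = (α i + β i) / 2 := by
    intro i hi
    by_contra hne
    have hlt : Real.sqrt (α i * β i) < (α i + β i) / 2 := lt_of_le_of_ne (hsq i hi) hne
    exact absurd hmid (ne_of_lt (Finset.prod_lt_prod hsqpos hsq ⟨i, hi, hlt⟩))
  intro i hi
  have h4 := heach i hi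
  have h5 : ((α i + β i) / 2) ^ 2 = α i * β i := by
    rw [← h4, Real.sq_sqrt (mul_pos (hα i hi) (hβ i hi)).le]
  nlinarith [sq_nonneg (α i - β i)]

/-- The paper's Theorem 1 (finite support): if every element of the finite
sample space occurs among the first `N` observations, then for any two
sequences `G₁ⁿ`, `G₂ⁿ` of GMLEs (each based on the first `n` observations),
the difference of the estimated mixture means
`E_{G₁ⁿ} η(θ) − E_{G₂ⁿ} η(θ)` tends to `0`, where `η θ = ∑ y, h y * f y θ`. -/
theorem gmle_mixture_mean_difference_tendsto_zero
    {Θ 𝒴 : Type*} [MeasurableSpace Θ] [Fintype 𝒴] [Nonempty 𝒴]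
    (f : 𝒴 → Θ → ℝ≥0) (hfpos : ∀ y θ, 0 < f y θ)
    (hfmeas : ∀ y, Measurable fun θ => f y θ)
    (hf1 : ∀ θ, ∑ y : 𝒴, f y θ = 1)
    (h : 𝒴 → ℝ)
    (y : ℕ → 𝒴) (hy : ∃ N : ℕ, ∀ v : 𝒴, ∃ i < N, y i = v)
    (G₁ G₂ : ℕ → Measure Θ)
    (hG₁prob : ∀ n, IsProbabilityMeasure (G₁ n))
    (hG₂prob : ∀ n, IsProbabilityMeasure (G₂ n))
    (hG₁ : ∀ n, ∀ G : Measure Θ, IsProbabilityMeasure G →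
      ∏ i ∈ Finset.range n, ∫⁻ θ, (f (y i) θ : ℝ≥0∞) ∂G ≤
        ∏ i ∈ Finset.range n, ∫⁻ θ, (f (y i) θ : ℝ≥0∞) ∂(G₁ n))
    (hG₂ : ∀ n, ∀ G : Measure Θ, IsProbabilityMeasure G →
      ∏ i ∈ Finset.range n, ∫⁻ θ, (f (y i) θ : ℝ≥0∞) ∂G ≤
        ∏ i ∈ Finset.range n, ∫⁻ θ, (f (y i) θ : ℝ≥0∞) ∂(G₂ n)) :
    Tendsto (fun n : ℕ =>
        (∫ θ, (∑ v : 𝒴, h v * (f v θ : ℝ)) ∂(G₁ n))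
          - ∫ θ, (∑ v : 𝒴, h v * (f v θ : ℝ)) ∂(G₂ n))
      atTop (nhds 0) := by
  obtain ⟨N, hN⟩ := hy
  -- basic facts
  have hfle1 : ∀ v θ, f v θ ≤ 1 := by
    intro v θ
    rw [← hf1 θ]
    exact Finset.single_le_sum (fun i _ => (zero_le : 0 ≤ f i θ)) (Finset.mem_univ v)
  have hmeas : ∀ v : 𝒴, Measurable fun θ => ((f v θ : ℝ≥0∞)) :=
    fun v => (hfmeas v).coe_nnreal_ennreal
  -- the mixture "fitted value" L G v
  set L : Measure Θ → 𝒴 → ℝ≥0∞ := fun G v => ∫⁻ θ, (f v θ : ℝ≥0∞) ∂G with hL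
  have hLle1 : ∀ (G : Measure Θ), IsProbabilityMeasure G → ∀ v, L G v ≤ 1 := by
    intro G hG v
    calc L G v ≤ ∫⁻ _, (1 : ℝ≥0∞) ∂G :=
          lintegral_mono fun θ => ENNReal.coe_le_one_iff.mpr (hfle1 v θ)
      _ = 1 := by simp
  have hLpos : ∀ (G : Measure Θ), IsProbabilityMeasure G → ∀ v, 0 < L G v := by
    intro G hG v
    rw [hL]
    rw [lintegral_pos_iff_support (hmeas v)]
    have hs : (Function.support fun θ => ((f v θ : ℝ≥0∞))) = Set.univ := by
      ext θ
      simp [Function.support, (hfpos v θ).ne']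
    rw [hs, measure_univ]
    exact one_pos
  have hLne_top : ∀ (G : Measure Θ), IsProbabilityMeasure G → ∀ v, L G v ≠ ∞ :=
    fun G hG v => ne_top_of_le_ne_top one_ne_top (hLle1 G hG v)
  -- Key: for n ≥ N, fitted values agree
  have key : ∀ n, N ≤ n → ∀ v, L (G₁ n) v = L (G₂ n) v := by
    intro n hn
    set a : ℕ → ℝ≥0∞ := fun i => L (G₁ n) (y i) with ha
    set b : ℕ → ℝ≥0∞ := fun i => L (G₂ n) (y i) with hb
    have hAB : ∏ i ∈ Finset.range n, a i = ∏ i ∈ Finset.range n, b i :=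
      le_antisymm (hG₂ n (G₁ n) (hG₁prob n)) (hG₁ n (G₂ n) (hG₂prob n))
    -- mixture measure
    set G : Measure Θ := (2⁻¹ : ℝ≥0∞) • G₁ n + (2⁻¹ : ℝ≥0∞) • G₂ n with hGdef
    have hGprob : IsProbabilityMeasure G := by
      constructor
      simp [hGdef, Measure.add_apply, Measure.smul_apply, measure_univ,
        ENNReal.inv_two_add_inv_two]
    have hLG : ∀ v, L G v = 2⁻¹ * L (G₁ n) v + 2⁻¹ * L (G₂ n) v := by
      intro v
      simp [hL, hGdef, lintegral_add_measure, lintegral_smul_measure]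
    have hmix : ∏ i ∈ Finset.range n, (2⁻¹ * a i + 2⁻¹ * b i) ≤
        ∏ i ∈ Finset.range n, a i := by
      calc ∏ i ∈ Finset.range n, (2⁻¹ * a i + 2⁻¹ * b i)
          = ∏ i ∈ Finset.range n, L G (y i) :=
            Finset.prod_congr rfl fun i _ => (hLG (y i)).symm
        _ ≤ ∏ i ∈ Finset.range n, a i := hG₁ n G hGprob
    -- pass to reals
    set α : ℕ → ℝ := fun i => (a i).toReal with hαdef
    set β : ℕ → ℝ := fun i => (b i).toReal with hβdef
    have hane : ∀ i, a i ≠ ∞ := fun i => hLne_top _ (hG₁prob n) _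
    have hbne : ∀ i, b i ≠ ∞ := fun i => hLne_top _ (hG₂prob n) _
    have hαpos : ∀ i ∈ Finset.range n, 0 < α i := fun i _ =>
      ENNReal.toReal_pos (hLpos _ (hG₁prob n) _).ne' (hane i)
    have hβpos : ∀ i ∈ Finset.range n, 0 < β i := fun i _ =>
      ENNReal.toReal_pos (hLpos _ (hG₂prob n) _).ne' (hbne i)
    have hABr : ∏ i ∈ Finset.range n, α i = ∏ i ∈ Finset.range n, β i := by
      rw [hαdef, hβdef]
      simp only [← ENNReal.toReal_prod]
      rw [hAB]
    have hler : ∏ i ∈ Finset.range n, ((α i + β i) / 2) ≤ ∏ i ∈ Finset.range n, α i := by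
      have h1 : (∏ i ∈ Finset.range n, (2⁻¹ * a i + 2⁻¹ * b i)).toReal ≤
          (∏ i ∈ Finset.range n, a i).toReal :=
        ENNReal.toReal_mono (ENNReal.prod_ne_top fun i _ => hane i) hmix
      rw [ENNReal.toReal_prod, ENNReal.toReal_prod] at h1
      refine le_of_eq_of_le ?_ h1
      refine Finset.prod_congr rfl fun i hi => ?_
      rw [ENNReal.toReal_add
          (ENNReal.mul_ne_top (ENNReal.inv_ne_top.mpr two_ne_zero) (hane i))
          (ENNReal.mul_ne_top (ENNReal.inv_ne_top.mpr two_ne_zero) (hbne i)),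
        ENNReal.toReal_mul, ENNReal.toReal_mul, ENNReal.toReal_inv]
      simp only [hαdef, hβdef, ENNReal.toReal_ofNat]
      ring
    have heq := prod_avg_forces_eq α β hαpos hβpos hABr hler
    intro v
    obtain ⟨i, hiN, hiv⟩ := hN v
    have hi : i ∈ Finset.range n := Finset.mem_range.mpr (lt_of_lt_of_le hiN hn)
    have := heq i hi
    have hab : a i = b i :=
      (ENNReal.toReal_eq_toReal_iff' (hane i) (hbne i)).mp this
    rw [← hiv]
    exact hab
  -- integrability and expansion of the integrals
  have hintf : ∀ (G : Measure Θ), IsProbabilityMeasure G → ∀ v : 𝒴,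
      Integrable (fun θ => ((f v θ : ℝ))) G := by
    intro G hG v
    refine Integrable.mono' (integrable_const 1)
      ((measurable_coe_nnreal_real.comp (hfmeas v)).aestronglyMeasurable) ?_
    filter_upwards with θ
    rw [Real.norm_eq_abs, abs_of_nonneg (f v θ).coe_nonneg]
    exact_mod_cast hfle1 v θ
  have hexp : ∀ (G : Measure Θ), IsProbabilityMeasure G →
      ∫ θ, (∑ v : 𝒴, h v * (f v θ : ℝ)) ∂G = ∑ v : 𝒴, h v * (L G v).toReal := by
    intro G hG
    rw [integral_finset_sum _ (fun v _ => ((hintf G hG v).const_mul (h v)))]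
    refine Finset.sum_congr rfl fun v _ => ?_
    rw [integral_const_mul]
    congr 1
    rw [integral_eq_lintegral_of_nonneg_ae
      (Filter.Eventually.of_forall fun θ => (f v θ).coe_nonneg)
      ((measurable_coe_nnreal_real.comp (hfmeas v)).aestronglyMeasurable)]
    simp [hL, ENNReal.ofReal_coe_nnreal]
  -- conclude: eventually zero
  have hev : (fun _ : ℕ => (0 : ℝ)) =ᶠ[atTop] fun n : ℕ =>
      (∫ θ, (∑ v : 𝒴, h v * (f v θ : ℝ)) ∂(G₁ n))
        - ∫ θ, (∑ v : 𝒴, h v * (f v θ : ℝ)) ∂(G₂ n) := by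
    rw [Filter.eventuallyEq_iff_exists_mem]
    refine ⟨Set.Ici N, Filter.Ici_mem_atTop N, fun n hn => ?_⟩
    simp only
    rw [hexp (G₁ n) (hG₁prob n), hexp (G₂ n) (hG₂prob n)]
    have : ∀ v : 𝒴, L (G₁ n) v = L (G₂ n) v := key n hn
    simp [this]
  exact Tendsto.congr' hev tendsto_const_nhds
end

section
/- Let Θ be a metric space equipped with its Borel σ-algebra, 𝒴 a finite nonempty set, and f : 𝒴 × Θ → (0,∞) such that for each y ∈ 𝒴 the map θ ↦ f(y,θ) is continuous and bounded, and ∑_{y ∈ 𝒴} f(y,θ) = 1 for every θ. Let h : 𝒴 → ℝ be bounded and define η(θ) = ∑_{y ∈ 𝒴} h(y) f(y,θ). Let y₁, y₂, … be a sequence in 𝒴 such that there exists N with every element of 𝒴 occurring among y₁,…,y_N. Let G be a probability measure on Θ, and suppose there exists a sequence Ĝ₀ⁿ of probability measures, each Ĝ₀ⁿ maximizing G' ↦ ∏_{i=1}^n f_{G'}(yᵢ) over all probability measures on Θ, such that Ĝ₀ⁿ converges weakly to G. Then for every sequence Ĝⁿ of probability measures with each Ĝⁿ maximizing G' ↦ ∏_{i=1}^n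 f_{G'}(yᵢ), one has ∫ η dĜⁿ → ∫ η dG as n → ∞. -/
open MeasureTheory ENNReal NNReal Filter

private lemma avg_sq_eq_aux {a b : ℝ} (ha : 0 ≤ a) (hb : 0 ≤ b)
    (hab : a * b = ((a + b) / 2) ^ 2) : a = b := by
  nlinarith [sq_nonneg (a - b)]

private lemma prod_eq_of_le_aux {ι : Type*} {s : Finset ι} {u v : ι → ℝ}
    (hpos : ∀ i ∈ s, 0 < u i) (hle : ∀ i ∈ s, u i ≤ v i)
    (hprod : ∏ i ∈ s, v i ≤ ∏ i ∈ s, u i) : ∀ i ∈ s, u i = v i := by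
  by_contra hc
  push_neg at hc
  obtain ⟨j, hj, hne⟩ := hc
  exact absurd (Finset.prod_lt_prod hpos hle ⟨j, hj, lt_of_le_of_ne (hle j hj) hne⟩)
    (not_lt.mpr hprod)

/-- The paper's Theorem 3 (finite-support setting): if some sequence `G₀ⁿ` of
GMLEs converges weakly to the true mixing distribution `G` (the paper's
Assumption 3), then every sequence `Gⁿ` of GMLEs yields a consistent estimate
of the mixture mean: `∫ η dGⁿ → ∫ η dG`, where `η θ = ∑ y, h y * f y θ`,
without any identifiability assumption. -/
theorem gmle_mixture_mean_consistent_of_some_gmle_weakly_convergent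
    {Θ 𝒴 : Type*} [MetricSpace Θ] [MeasurableSpace Θ] [BorelSpace Θ]
    [Fintype 𝒴] [Nonempty 𝒴]
    (f : 𝒴 → Θ → ℝ≥0) (hfpos : ∀ y θ, 0 < f y θ)
    (hfcont : ∀ y, Continuous fun θ => f y θ)
    (hf1 : ∀ θ, ∑ y : 𝒴, f y θ = 1)
    (h : 𝒴 → ℝ)
    (y : ℕ → 𝒴) (hy : ∃ N : ℕ, ∀ v : 𝒴, ∃ i < N, y i = v)
    (G : Measure Θ) [IsProbabilityMeasure G]
    (G₀ : ℕ → Measure Θ) (hG₀prob : ∀ n, IsProbabilityMeasure (G₀ n))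
    (hG₀gmle : ∀ n, ∀ G' : Measure Θ, IsProbabilityMeasure G' →
      ∏ i ∈ Finset.range n, ∫⁻ θ, (f (y i) θ : ℝ≥0∞) ∂G' ≤
        ∏ i ∈ Finset.range n, ∫⁻ θ, (f (y i) θ : ℝ≥0∞) ∂(G₀ n))
    (hG₀weak : ∀ g : BoundedContinuousFunction Θ ℝ,
      Tendsto (fun n : ℕ => ∫ θ, g θ ∂(G₀ n)) atTop (nhds (∫ θ, g θ ∂G))) :
    ∀ Ghat : ℕ → Measure Θ, (∀ n, IsProbabilityMeasure (Ghat n)) →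
      (∀ n, ∀ G' : Measure Θ, IsProbabilityMeasure G' →
        ∏ i ∈ Finset.range n, ∫⁻ θ, (f (y i) θ : ℝ≥0∞) ∂G' ≤
          ∏ i ∈ Finset.range n, ∫⁻ θ, (f (y i) θ : ℝ≥0∞) ∂(Ghat n)) →
      Tendsto (fun n : ℕ => ∫ θ, (∑ v : 𝒴, h v * (f v θ : ℝ)) ∂(Ghat n))
        atTop (nhds (∫ θ, (∑ v : 𝒴, h v * (f v θ : ℝ)) ∂G)) := by
  intro Ghat hGhatProb hGhatgmle
  obtain ⟨N, hN⟩ := hy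
  -- basic bounds on f
  have hfle1 : ∀ v θ, f v θ ≤ 1 := fun v θ => by
    rw [← hf1 θ]
    exact Finset.single_le_sum (f := fun i => f i θ) (fun i _ => zero_le) (Finset.mem_univ v)
  have hmeas : ∀ v : 𝒴, Measurable fun θ => (f v θ : ℝ≥0∞) := fun v =>
    (ENNReal.continuous_coe.comp (hfcont v)).measurable
  set P : Measure Θ → 𝒴 → ℝ≥0∞ := fun μ v => ∫⁻ θ, (f v θ : ℝ≥0∞) ∂μ with hPdef
  have hPle1 : ∀ (μ : Measure Θ), IsProbabilityMeasure μ → ∀ v, P μ v ≤ 1 := by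
    intro μ hμ v
    calc ∫⁻ θ, (f v θ : ℝ≥0∞) ∂μ ≤ ∫⁻ _, 1 ∂μ :=
          lintegral_mono fun θ => by simpa using ENNReal.coe_le_coe.2 (hfle1 v θ)
      _ = 1 := by simp [hμ.measure_univ]
  have hPpos : ∀ (μ : Measure Θ), IsProbabilityMeasure μ → ∀ v, P μ v ≠ 0 := by
    intro μ hμ v h0
    rw [hPdef] at h0
    simp only at h0
    rw [lintegral_eq_zero_iff (hmeas v)] at h0
    have hfalse : ∀ᵐ θ ∂μ, False := h0.mono fun θ hθ => by
      have : (f v θ : ℝ≥0∞) = 0 := hθ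
      exact absurd (by exact_mod_cast this) (hfpos v θ).ne'
    rw [Filter.eventually_false_iff_eq_bot, ae_eq_bot] at hfalse
    have := hμ.measure_univ
    simp [hfalse] at this
  have hPnetop : ∀ (μ : Measure Θ), IsProbabilityMeasure μ → ∀ v, P μ v ≠ ⊤ :=
    fun μ hμ v => ne_top_of_le_ne_top one_ne_top (hPle1 μ hμ v)
  -- key step: for n ≥ N, P (Ghat n) = P (G₀ n)
  have key : ∀ n, N ≤ n → ∀ v, P (Ghat n) v = P (G₀ n) v := by
    intro n hn
    haveI h1 := hGhatProb n
    haveI h2 := hG₀prob n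
    set M : Measure Θ := (2 : ℝ≥0∞)⁻¹ • (Ghat n) + (2 : ℝ≥0∞)⁻¹ • (G₀ n) with hM
    have hMprob : IsProbabilityMeasure M := by
      constructor
      simp [hM, Measure.add_apply, Measure.smul_apply, h1.measure_univ, h2.measure_univ,
        ENNReal.inv_two_add_inv_two]
    have hPM : ∀ v, P M v = 2⁻¹ * P (Ghat n) v + 2⁻¹ * P (G₀ n) v := by
      intro v
      simp [hPdef, hM, lintegral_add_measure, lintegral_smul_measure]
    -- products
    have hAB : (∏ i ∈ Finset.range n, P (Ghat n) (y i)) =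
        ∏ i ∈ Finset.range n, P (G₀ n) (y i) :=
      le_antisymm (hG₀gmle n (Ghat n) h1) (hGhatgmle n (G₀ n) h2)
    have hCA : (∏ i ∈ Finset.range n, P M (y i)) ≤
        ∏ i ∈ Finset.range n, P (Ghat n) (y i) := hGhatgmle n M hMprob
    -- pass to reals
    set a : ℕ → ℝ := fun i => (P (Ghat n) (y i)).toReal with hadef
    set b : ℕ → ℝ := fun i => (P (G₀ n) (y i)).toReal with hbdef
    set c : ℕ → ℝ := fun i => (P M (y i)).toReal with hcdef
    have hapos : ∀ i, 0 < a i := fun i =>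
      ENNReal.toReal_pos (hPpos _ h1 _) (hPnetop _ h1 _)
    have hbpos : ∀ i, 0 < b i := fun i =>
      ENNReal.toReal_pos (hPpos _ h2 _) (hPnetop _ h2 _)
    have hc_eq : ∀ i, c i = (a i + b i) / 2 := by
      intro i
      rw [hcdef]
      simp only [hPM]
      rw [ENNReal.toReal_add
        (ENNReal.mul_ne_top (by simp) (hPnetop _ h1 _))
        (ENNReal.mul_ne_top (by simp) (hPnetop _ h2 _)), ENNReal.toReal_mul,
        ENNReal.toReal_mul]
      simp [hadef, hbdef]
      ring
    have hAnetop : (∏ i ∈ Finset.range n, P (Ghat n) (y i)) ≠ ⊤ :=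
      ENNReal.prod_ne_top fun i _ => hPnetop _ h1 _
    have hCA' : (∏ i ∈ Finset.range n, c i) ≤ ∏ i ∈ Finset.range n, a i := by
      rw [hadef, hcdef]
      simp only [← ENNReal.toReal_prod]
      exact ENNReal.toReal_mono hAnetop hCA
    have hAB' : (∏ i ∈ Finset.range n, a i) = ∏ i ∈ Finset.range n, b i := by
      rw [hadef, hbdef]; simp only [← ENNReal.toReal_prod, hAB]
    -- termwise AM-GM
    have hterm : ∀ i ∈ Finset.range n, a i * b i ≤ c i ^ 2 := by
      intro i _
      rw [hc_eq i]
      nlinarith [sq_nonneg (a i - b i)]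
    have hprodle : (∏ i ∈ Finset.range n, c i ^ 2) ≤ ∏ i ∈ Finset.range n, (a i * b i) := by
      have h1' : (∏ i ∈ Finset.range n, c i ^ 2) = (∏ i ∈ Finset.range n, c i) ^ 2 := by
        rw [Finset.prod_pow]
      have h2' : (∏ i ∈ Finset.range n, (a i * b i)) =
          (∏ i ∈ Finset.range n, a i) ^ 2 := by
        rw [Finset.prod_mul_distrib, ← hAB', sq]
      rw [h1', h2']
      have hcnn : 0 ≤ ∏ i ∈ Finset.range n, c i :=
        Finset.prod_nonneg fun i _ => ENNReal.toReal_nonneg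
      exact pow_le_pow_left₀ hcnn hCA' 2
    have heq : ∀ i ∈ Finset.range n, a i * b i = c i ^ 2 :=
      prod_eq_of_le_aux (fun i _ => mul_pos (hapos i) (hbpos i)) hterm hprodle
    have hab : ∀ i ∈ Finset.range n, a i = b i := by
      intro i hi
      have := heq i hi
      rw [hc_eq i] at this
      exact avg_sq_eq_aux (hapos i).le (hbpos i).le this
    intro v
    obtain ⟨i, hiN, hiy⟩ := hN v
    have hin : i ∈ Finset.range n := Finset.mem_range.mpr (lt_of_lt_of_le hiN hn)
    have := hab i hin
    rw [hadef, hbdef] at this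
    simp only [hiy] at this
    exact (ENNReal.toReal_eq_toReal_iff' (hPnetop _ h1 v) (hPnetop _ h2 v)).mp this
  -- integral of η in terms of P
  have hcontR : ∀ v : 𝒴, Continuous fun θ => (f v θ : ℝ) := fun v =>
    NNReal.continuous_coe.comp (hfcont v)
  have hint : ∀ (μ : Measure Θ), IsProbabilityMeasure μ → ∀ v : 𝒴,
      Integrable (fun θ => (f v θ : ℝ)) μ := by
    intro μ hμ v
    refine (integrable_const (1 : ℝ)).mono' (hcontR v).aestronglyMeasurable ?_
    filter_upwards with θ
    rw [Real.norm_eq_abs, abs_of_nonneg (f v θ).coe_nonneg]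
    exact_mod_cast hfle1 v θ
  have hI : ∀ (μ : Measure Θ), IsProbabilityMeasure μ →
      (∫ θ, (∑ v : 𝒴, h v * (f v θ : ℝ)) ∂μ) = ∑ v : 𝒴, h v * (P μ v).toReal := by
    intro μ hμ
    rw [integral_finset_sum _ fun v _ => ((hint μ hμ v).const_mul (h v))]
    congr 1
    funext v
    rw [integral_const_mul]
    congr 1
    rw [integral_eq_lintegral_of_nonneg_ae
      (Filter.Eventually.of_forall fun θ => (f v θ).coe_nonneg)
      (hcontR v).aestronglyMeasurable]
    congr 1
    exact lintegral_congr fun θ => ENNReal.ofReal_coe_nnreal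
  -- bundle η as a bounded continuous function
  set η : BoundedContinuousFunction Θ ℝ :=
    BoundedContinuousFunction.ofNormedAddCommGroup
      (fun θ => ∑ v : 𝒴, h v * (f v θ : ℝ))
      (continuous_finset_sum _ fun v _ => (continuous_const.mul (hcontR v)))
      (∑ v : 𝒴, |h v|)
      (by
        intro θ
        calc ‖∑ v : 𝒴, h v * (f v θ : ℝ)‖ ≤ ∑ v : 𝒴, ‖h v * (f v θ : ℝ)‖ :=
              norm_sum_le _ _
          _ ≤ ∑ v : 𝒴, |h v| := by
              refine Finset.sum_le_sum fun v _ => ?_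
              rw [norm_mul, Real.norm_eq_abs, Real.norm_eq_abs,
                abs_of_nonneg (f v θ).coe_nonneg]
              calc |h v| * (f v θ : ℝ) ≤ |h v| * 1 := by
                    refine mul_le_mul_of_nonneg_left ?_ (abs_nonneg _)
                    exact_mod_cast hfle1 v θ
                _ = |h v| := mul_one _) with hη
  have hηcoe : ∀ θ, η θ = ∑ v : 𝒴, h v * (f v θ : ℝ) := fun θ => rfl
  have hlim := hG₀weak η
  simp only [hηcoe] at hlim
  refine hlim.congr' ?_
  filter_upwards [eventually_ge_atTop N] with n hn
  rw [hI (G₀ n) (hG₀prob n), hI (Ghat n) (hGhatProb n)]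
  exact Finset.sum_congr rfl fun v _ => by rw [key n hn v]
end
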